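/- Let n ≥ 1 and consider a sequence of vectors y_k ∈ ℝ^n, k = 0, 1, 2, …, step sizes β_k(m) ∈ [0,1], error sequences e_k(m) ∈ ℝ, constants γ ∈ (0,1), c ≥ 0, and M ≥ 0, such that for every coordinate m and every k: (i) y_{k+1}(m) ≥ (1 − β_k(m))·y_k(m) + β_k(m)·( γ·min_{m'} y_k(m') − e_k(m) ); (ii) Σ_{k=0}^∞ β_k(m) = ∞; (iii) e_k(m) → c as k → ∞; and (iv) y_k(m) ≥ −M for all k and m. Then liminf_{k→∞} y_k(m) ≥ −c/(1−γ) for every coordinate m. -/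

import Mathlib

open Finset

noncomputable instance stdSimplexNonempty {A : Type*} [Fintype A] [Nonempty A] :
    Nonempty (stdSimplex ℝ A) := by
  classical
  exact ⟨⟨Pi.single (Classical.arbitrary A) 1, single_mem_stdSimplex ℝ _⟩⟩

/-- Expected payoff `μᵀ R ν` of the matrix game `R` under mixed strategies `μ, ν`. -/
noncomputable def pay {A B : Type*} [Fintype A] [Fintype B]
    (R : A → B → ℝ) (μ : A → ℝ) (ν : B → ℝ) : ℝ :=
  ∑ a, ∑ b, μ a * R a b * ν b

/-- Shannon entropy `H(μ) = -∑ μ(a) log μ(a)` (note `Real.log 0 = 0` in Mathlib). -/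
noncomputable def entropy {A : Type*} [Fintype A] (μ : A → ℝ) : ℝ :=
  -∑ a, μ a * Real.log (μ a)

/-- The zero-sum matrix-game value `val(R) = max_{μ∈Δ(A)} min_{ν∈Δ(B)} μᵀ R ν`. -/
noncomputable def matVal {A B : Type*} [Fintype A] [Fintype B] [Nonempty A] [Nonempty B]
    (R : A → B → ℝ) : ℝ :=
  ⨆ μ : stdSimplex ℝ A, ⨅ ν : stdSimplex ℝ B, pay R μ.1 ν.1

/-- The entropy-regularized value
`val̄(R) = max_{μ∈Δ(A)} min_{ν∈Δ(B)} { μᵀ R ν + τ₁ H(μ) - τ₂ H(ν) }`. -/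
noncomputable def regVal {A B : Type*} [Fintype A] [Fintype B] [Nonempty A] [Nonempty B]
    (τ1 τ2 : ℝ) (R : A → B → ℝ) : ℝ :=
  ⨆ μ : stdSimplex ℝ A, ⨅ ν : stdSimplex ℝ B,
    pay R μ.1 ν.1 + τ1 * entropy μ.1 - τ2 * entropy ν.1

/-- Softmax (smoothed best response) with temperature `τ`. -/
noncomputable def softmax {A : Type*} [Fintype A] (τ : ℝ) (q : A → ℝ) : A → ℝ :=
  fun a => Real.exp (q a / τ) / ∑ b, Real.exp (q b / τ)

/-- Maximum norm of a matrix: the maximum of the absolute values of its entries. -/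
noncomputable def matMaxNorm {A B : Type*} [Fintype A] [Fintype B] [Nonempty A] [Nonempty B]
    (M : A → B → ℝ) : ℝ :=
  (Finset.univ (α := A × B)).sup' univ_nonempty (fun ab => |M ab.1 ab.2|)

/-- Sup norm of a vector. -/
noncomputable def vecSupNorm {A : Type*} [Fintype A] [Nonempty A] (q : A → ℝ) : ℝ :=
  Finset.univ.sup' univ_nonempty (fun a => |q a|)


open Filter in
lemma aux_prod_tendsto (b : ℕ → ℝ) (h0 : ∀ k, 0 ≤ b k) (h1 : ∀ k, b k ≤ 1) (K : ℕ)
    (hdiv : Tendsto (fun n => ∑ k ∈ Finset.range n, b k) atTop atTop) :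
    Tendsto (fun n => ∏ j ∈ Finset.Ico K n, (1 - b j)) atTop (nhds 0) := by
  have hle : ∀ n, ∏ j ∈ Finset.Ico K n, (1 - b j) ≤ Real.exp (-(∑ j ∈ Finset.Ico K n, b j)) := by
    intro n
    calc ∏ j ∈ Finset.Ico K n, (1 - b j) ≤ ∏ j ∈ Finset.Ico K n, Real.exp (-(b j)) := by
          apply Finset.prod_le_prod
          · intro i _; linarith [h1 i]
          · intro i _
            have := Real.add_one_le_exp (-(b i)); linarith
      _ = Real.exp (-(∑ j ∈ Finset.Ico K n, b j)) := by
          rw [← Real.exp_sum]; simp [Finset.sum_neg_distrib]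
  have hpos : ∀ n, 0 ≤ ∏ j ∈ Finset.Ico K n, (1 - b j) := by
    intro n; apply Finset.prod_nonneg; intro i _; linarith [h1 i]
  have hsum : Tendsto (fun n => ∑ j ∈ Finset.Ico K n, b j) atTop atTop := by
    have heq : ∀ᶠ n in atTop, (∑ j ∈ Finset.range n, b j) - (∑ j ∈ Finset.range K, b j)
        = ∑ j ∈ Finset.Ico K n, b j := by
      filter_upwards [eventually_ge_atTop K] with n hn
      rw [Finset.sum_Ico_eq_sub _ hn]
    exact Tendsto.congr' heq (hdiv.atTop_add tendsto_const_nhds)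
  have hexp : Tendsto (fun n => Real.exp (-(∑ j ∈ Finset.Ico K n, b j))) atTop (nhds 0) :=
    Real.tendsto_exp_atBot.comp (tendsto_neg_atTop_atBot.comp hsum)
  exact squeeze_zero hpos hle hexp

lemma aux_gronwall (x : ℕ → ℝ) (b : ℕ → ℝ) (K : ℕ) (h1 : ∀ k, b k ≤ 1)
    (hrec : ∀ k, K ≤ k → (1 - b k) * x k ≤ x (k + 1)) :
    ∀ n, K ≤ n → (∏ j ∈ Finset.Ico K n, (1 - b j)) * min (x K) 0 ≤ min (x n) 0 := by
  intro n hn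
  induction n with
  | zero =>
    have : K = 0 := Nat.le_zero.mp hn
    subst this; simp
  | succ n ih =>
    rcases Nat.lt_or_ge K (n + 1) with h | h
    · have hKn : K ≤ n := Nat.lt_succ_iff.mp h
      have hnb : 0 ≤ 1 - b n := by linarith [h1 n]
      have hPn : 0 ≤ ∏ j ∈ Finset.Ico K n, (1 - b j) := by
        apply Finset.prod_nonneg; intro i _; linarith [h1 i]
      have step : (1 - b n) * min (x n) 0 ≤ min (x (n + 1)) 0 := by
        apply le_min
        · calc (1 - b n) * min (x n) 0 ≤ (1 - b n) * x n :=
                mul_le_mul_of_nonneg_left (min_le_left _ _) hnb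
            _ ≤ x (n + 1) := hrec n hKn
        · exact mul_nonpos_of_nonneg_of_nonpos hnb (min_le_right _ _)
      calc (∏ j ∈ Finset.Ico K (n + 1), (1 - b j)) * min (x K) 0
          = (1 - b n) * ((∏ j ∈ Finset.Ico K n, (1 - b j)) * min (x K) 0) := by
            rw [Finset.prod_Ico_succ_top hKn]; ring
        _ ≤ (1 - b n) * min (x n) 0 :=
            mul_le_mul_of_nonneg_left (ih hKn) hnb
        _ ≤ min (x (n + 1)) 0 := step
    · have : K = n + 1 := le_antisymm hn h
      subst this; simp

open Filter in
lemma aux_key {I : Type*} [Fintype I] [Nonempty I]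
    (y : ℕ → I → ℝ) (β : ℕ → I → ℝ) (e : ℕ → I → ℝ)
    (γ c M : ℝ) (hγ0 : 0 < γ) (hM : 0 ≤ M)
    (hβ : ∀ k m, β k m ∈ Set.Icc (0 : ℝ) 1)
    (hrec : ∀ k m,
      (1 - β k m) * y k m +
          β k m * (γ * Finset.univ.inf' univ_nonempty (fun m' => y k m') - e k m) ≤
        y (k + 1) m)
    (hβdiv : ∀ m, Tendsto (fun n => ∑ k ∈ Finset.range n, β k m) atTop atTop)
    (he : ∀ m, Tendsto (fun k => e k m) atTop (nhds c))
    (hbdd : ∀ k m, -M ≤ y k m)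
    (m : I) (L δ : ℝ) (hδ : 0 < δ)
    (hL : ∀ᶠ k in atTop, L ≤ Finset.univ.inf' univ_nonempty (fun m' => y k m')) :
    ∀ᶠ k in atTop, γ * L - c - δ - δ ≤ y k m := by
  have hee : ∀ᶠ k in atTop, e k m ≤ c + δ := by
    filter_upwards [(he m).eventually (eventually_le_nhds (by linarith : c < c + δ))] with k hk
    exact hk
  obtain ⟨K, hK⟩ := (hL.and hee).exists_forall_of_atTop
  set D : ℝ := γ * L - c - δ with hD
  set x : ℕ → ℝ := fun k => y k m - D with hx
  have hrecx : ∀ k, K ≤ k → (1 - β k m) * x k ≤ x (k + 1) := by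
    intro k hk
    obtain ⟨hL', he'⟩ := hK k hk
    have hβ0 := (hβ k m).1
    have hβ1 := (hβ k m).2
    have h1 : D ≤ γ * Finset.univ.inf' univ_nonempty (fun m' => y k m') - e k m := by
      have : γ * L ≤ γ * Finset.univ.inf' univ_nonempty (fun m' => y k m') :=
        mul_le_mul_of_nonneg_left hL' hγ0.le
      simp only [hD]; linarith
    have h2 : β k m * D ≤ β k m * (γ * Finset.univ.inf' univ_nonempty (fun m' => y k m') - e k m) :=
      mul_le_mul_of_nonneg_left h1 hβ0
    have h3 := hrec k m
    simp only [hx]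
    nlinarith
  have hgron := aux_gronwall x (fun k => β k m) K (fun k => (hβ k m).2) hrecx
  set C : ℝ := M + |D| with hC
  have hC0 : 0 ≤ C := by positivity
  have hxK : -C ≤ min (x K) 0 := by
    apply le_min
    · have := hbdd K m
      have : -M - D ≤ x K := by simp only [hx]; linarith
      have hD' : D ≤ |D| := le_abs_self D
      simp only [hC]; linarith
    · simp only [hC]; linarith
  have hprod := aux_prod_tendsto (fun k => β k m) (fun k => (hβ k m).1)
    (fun k => (hβ k m).2) K (hβdiv m)
  have hPC : Tendsto (fun n => (∏ j ∈ Finset.Ico K n, (1 - β j m)) * (-C)) atTop (nhds 0) := by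
    simpa using hprod.mul_const (-C)
  have hev : ∀ᶠ n in atTop, -δ < (∏ j ∈ Finset.Ico K n, (1 - β j m)) * (-C) :=
    hPC.eventually (eventually_gt_nhds (by linarith : (-δ : ℝ) < 0))
  filter_upwards [hev, eventually_ge_atTop K] with n h1 h2
  have hPn : 0 ≤ ∏ j ∈ Finset.Ico K n, (1 - β j m) := by
    apply Finset.prod_nonneg; intro i _; linarith [(hβ i m).2]
  have h3 : (∏ j ∈ Finset.Ico K n, (1 - β j m)) * (-C)
      ≤ (∏ j ∈ Finset.Ico K n, (1 - β j m)) * min (x K) 0 :=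
    mul_le_mul_of_nonneg_left hxK hPn
  have h4 := hgron n h2
  have h5 : min (x n) 0 ≤ x n := min_le_left _ _
  have : -δ ≤ x n := by linarith
  simp only [hx, hD] at this
  linarith

theorem stmt_11 {I : Type*} [Fintype I] [Nonempty I]
    (y : ℕ → I → ℝ) (β : ℕ → I → ℝ) (e : ℕ → I → ℝ)
    (γ c M : ℝ) (hγ : γ ∈ Set.Ioo (0 : ℝ) 1) (hc : 0 ≤ c) (hM : 0 ≤ M)
    (hβ : ∀ k m, β k m ∈ Set.Icc (0 : ℝ) 1)
    (hrec : ∀ k m,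
      (1 - β k m) * y k m +
          β k m * (γ * Finset.univ.inf' univ_nonempty (fun m' => y k m') - e k m) ≤
        y (k + 1) m)
    (hβdiv : ∀ m, Filter.Tendsto (fun n => ∑ k ∈ Finset.range n, β k m)
        Filter.atTop Filter.atTop)
    (he : ∀ m, Filter.Tendsto (fun k => e k m) Filter.atTop (nhds c))
    (hbdd : ∀ k m, -M ≤ y k m) :
    ∀ m, -(c / (1 - γ)) ≤ Filter.liminf (fun k => y k m) Filter.atTop := by
  classical
  obtain ⟨hγ0, hγ1⟩ := hγ
  have hγ1' : (0:ℝ) < 1 - γ := by linarith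
  set z : ℕ → ℝ := fun k => Finset.univ.inf' univ_nonempty (fun m' => y k m') with hz
  set L : ℝ := -(c / (1 - γ)) with hLdef
  have hL0 : L ≤ 0 := by
    simp only [hLdef, neg_nonpos]
    positivity
  have hLγ : γ * L - c = L := by
    simp only [hLdef]
    field_simp
    ring
  set T : Set ℝ := {a | a ≤ 0 ∧ ∀ᶠ k in Filter.atTop, a ≤ z k} with hT
  have hzbd : ∀ k, -(max M 0) ≤ z k := by
    intro k
    apply Finset.le_inf'
    intro m _
    have := hbdd k m
    have : -(max M 0) ≤ -M := neg_le_neg (le_max_left _ _)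
    linarith [hbdd k m]
  have hTne : -(max M 0) ∈ T := by
    refine ⟨by simp [le_max_right], Filter.Eventually.of_forall hzbd⟩
  have hTbdd : BddAbove T := ⟨0, fun a ha => ha.1⟩
  set l : ℝ := sSup T with hl
  have hεl : ∀ ε > (0:ℝ), ∀ᶠ k in Filter.atTop, l - ε ≤ z k := by
    intro ε hε
    obtain ⟨a, haT, hla⟩ := exists_lt_of_lt_csSup ⟨_, hTne⟩ (by linarith : l - ε < l)
    filter_upwards [haT.2] with k hk
    linarith
  -- the key recursive inequality transferred to the liminf-type quantity l
  have hmain : ∀ ε > (0:ℝ), ∀ δ > (0:ℝ), min (γ * (l - ε) - c - δ - δ) 0 ≤ l := by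
    intro ε hε δ hδ
    have hev : ∀ᶠ k in Filter.atTop, ∀ m, γ * (l - ε) - c - δ - δ ≤ y k m := by
      rw [Filter.eventually_all]
      intro m
      exact aux_key y β e γ c M hγ0 hM hβ hrec hβdiv he hbdd m (l - ε) δ hδ (hεl ε hε)
    have hin : min (γ * (l - ε) - c - δ - δ) 0 ∈ T := by
      refine ⟨min_le_right _ _, ?_⟩
      filter_upwards [hev] with k hk
      apply Finset.le_inf'
      intro m _
      exact le_trans (min_le_left _ _) (hk m)
    exact le_csSup hTbdd hin
  have hlL : L ≤ l := by
    have hmin : min (γ * l - c) 0 ≤ l := by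
      apply le_of_forall_pos_le_add
      intro η hη
      have hden : (0:ℝ) < γ + 2 := by linarith
      set ε : ℝ := η / (γ + 2) with hεdef
      have hε : 0 < ε := by positivity
      have h1 := hmain ε hε ε hε
      have harg : γ * l - c - (γ * ε + 2 * ε) = γ * (l - ε) - c - ε - ε := by ring
      have h2 : min (γ * l - c) 0 - (γ * ε + 2 * ε) ≤ min (γ * (l - ε) - c - ε - ε) 0 := by
        rw [← harg]
        have ht : 0 ≤ γ * ε + 2 * ε := by positivity
        rcases min_cases (γ * l - c - (γ * ε + 2 * ε)) 0 with ⟨h, h'⟩ | ⟨h, h'⟩ <;>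
          rcases min_cases (γ * l - c) 0 with ⟨g, g'⟩ | ⟨g, g'⟩ <;> linarith
      have hεη : γ * ε + 2 * ε ≤ η := by
        simp only [hεdef]
        have : γ * (η / (γ + 2)) + 2 * (η / (γ + 2)) = η := by field_simp
        linarith
      linarith
    rcases min_cases (γ * l - c) 0 with ⟨h, h'⟩ | ⟨h, h'⟩
    · rw [h] at hmin
      rw [hLdef, neg_div' ]
      rw [div_le_iff₀ hγ1']
      nlinarith
    · rw [h] at hmin; linarith
  intro m
  have hfin : ∀ η > (0:ℝ), ∀ᶠ k in Filter.atTop, L - η ≤ y k m := by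
    intro η hη
    have hden : (0:ℝ) < γ + 2 := by linarith
    set ε : ℝ := η / (γ + 2) with hεdef
    have hε : 0 < ε := by positivity
    have h1 := aux_key y β e γ c M hγ0 hM hβ hrec hβdiv he hbdd m (l - ε) ε hε (hεl ε hε)
    filter_upwards [h1] with k hk
    have h2 : γ * L - c ≤ γ * l - c := by nlinarith
    have hεη : γ * ε + 2 * ε ≤ η := by
      simp only [hεdef]
      have : γ * (η / (γ + 2)) + 2 * (η / (γ + 2)) = η := by field_simp
      linarith
    have : γ * (l - ε) - c - ε - ε = γ * l - c - (γ * ε + 2 * ε) := by ring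
    rw [this] at hk
    linarith [hLγ]
  rw [Filter.liminf_eq]
  by_cases hb : BddAbove {a : ℝ | ∀ᶠ n in Filter.atTop, a ≤ y n m}
  · apply le_of_forall_pos_le_add
    intro η hη
    have : L - η ∈ {a : ℝ | ∀ᶠ n in Filter.atTop, a ≤ y n m} := hfin η hη
    have := le_csSup hb this
    linarith
  · rw [Real.sSup_of_not_bddAbove hb]
    exact hL0
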